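/- For real a > 0, 2·∫₀^∞ x²·(1/√(2π))·e^{-(x+a)²/2} dx = (1+a²)·(1 - erf(a/√2)) - a·√(2/π)·e^{-a²/2}, where erf is the error function. In particular this quantity is strictly decreasing in a and tends to 0 as a → ∞. -/

import Mathlib

open MeasureTheory Real Filter

/-- The Gauss error function. -/
noncomputable def erf (x : ℝ) : ℝ :=
  (2 / Real.sqrt Real.pi) * ∫ t in Set.Ioc (0 : ℝ) x, Real.exp (-t ^ 2)

namespace Stmt15Aux

lemma integrable_g0 : Integrable (fun t : ℝ => Real.exp (-t ^ 2 / 2)) := by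
  have h : (fun t : ℝ => Real.exp (-t ^ 2 / 2))
      = fun t : ℝ => Real.exp (-(1/2 : ℝ) * t ^ 2) := by
    funext t; ring_nf
  rw [h]
  exact integrable_exp_neg_mul_sq (by norm_num)

lemma integrable_g1 : Integrable (fun t : ℝ => t * Real.exp (-t ^ 2 / 2)) := by
  have h : (fun t : ℝ => t * Real.exp (-t ^ 2 / 2))
      = fun t : ℝ => t * Real.exp (-(1/2 : ℝ) * t ^ 2) := by
    funext t; ring_nf
  rw [h]
  exact integrable_mul_exp_neg_mul_sq (by norm_num)

lemma integrable_g2 : Integrable (fun t : ℝ => t ^ 2 * Real.exp (-t ^ 2 / 2)) := by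
  have hg : Integrable (fun t : ℝ => 4 * Real.exp (-(1/4 : ℝ) * t ^ 2)) :=
    (integrable_exp_neg_mul_sq (by norm_num)).const_mul 4
  refine hg.mono' ?_ ?_
  · exact (Continuous.mul (continuous_pow 2)
      (Real.continuous_exp.comp (by continuity))).aestronglyMeasurable
  · filter_upwards with t
    rw [Real.norm_eq_abs, abs_of_nonneg (by positivity)]
    have h1 : t ^ 2 / 4 ≤ Real.exp (t ^ 2 / 4) := by
      nlinarith [Real.add_one_le_exp (t ^ 2 / 4)]
    have h2 : t ^ 2 ≤ 4 * Real.exp (t ^ 2 / 4) := by linarith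
    calc t ^ 2 * Real.exp (-t ^ 2 / 2)
        ≤ 4 * Real.exp (t ^ 2 / 4) * Real.exp (-t ^ 2 / 2) :=
          mul_le_mul_of_nonneg_right h2 (Real.exp_pos _).le
      _ = 4 * Real.exp (-(1/4) * t ^ 2) := by
          rw [mul_assoc, ← Real.exp_add]; congr 1; ring

lemma aux_tendsto {c : ℝ} (hc : 0 < c) :
    Tendsto (fun t : ℝ => Real.exp (-t ^ 2 / c)) atTop (nhds 0) := by
  have h1 : Tendsto (fun t : ℝ => t ^ 2) atTop atTop := tendsto_pow_atTop two_ne_zero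
  have h2 : Tendsto (fun t : ℝ => t ^ 2 / c) atTop atTop := h1.atTop_div_const hc
  have h3 : Tendsto (fun t : ℝ => -t ^ 2 / c) atTop atBot := by
    simpa [Function.comp_def, neg_div] using tendsto_neg_atTop_atBot.comp h2
  exact Real.tendsto_exp_atBot.comp h3

lemma hasDerivAt_inner (t : ℝ) : HasDerivAt (fun t : ℝ => -t ^ 2 / 2) (-t) t := by
  have h := (hasDerivAt_pow 2 t).neg.div_const 2
  refine h.congr_deriv ?_
  push_cast
  ring_nf

lemma J1 (a : ℝ) :
    ∫ t in Set.Ioi a, t * Real.exp (-t ^ 2 / 2) = Real.exp (-a ^ 2 / 2) := by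
  have hderiv : ∀ t ∈ Set.Ici a,
      HasDerivAt (fun t : ℝ => -Real.exp (-t ^ 2 / 2)) (t * Real.exp (-t ^ 2 / 2)) t := by
    intro t _
    have h := ((hasDerivAt_inner t).exp).neg
    refine h.congr_deriv ?_
    ring_nf
  have htend : Tendsto (fun t : ℝ => -Real.exp (-t ^ 2 / 2)) atTop (nhds 0) := by
    simpa using (aux_tendsto (by norm_num : (0:ℝ) < 2)).neg
  have h := integral_Ioi_of_hasDerivAt_of_tendsto' hderiv integrable_g1.integrableOn htend
  simpa using h

lemma J2 (a : ℝ) :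
    ∫ t in Set.Ioi a, (t ^ 2 - 1) * Real.exp (-t ^ 2 / 2)
      = a * Real.exp (-a ^ 2 / 2) := by
  have hderiv : ∀ t ∈ Set.Ici a,
      HasDerivAt (fun t : ℝ => -(t * Real.exp (-t ^ 2 / 2)))
        ((t ^ 2 - 1) * Real.exp (-t ^ 2 / 2)) t := by
    intro t _
    have h := ((hasDerivAt_id t).mul (hasDerivAt_inner t).exp).neg
    refine h.congr_deriv ?_
    simp only [id_eq]
    ring
  have htend : Tendsto (fun t : ℝ => -(t * Real.exp (-t ^ 2 / 2))) atTop (nhds 0) := by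
    have hb : ∀ᶠ t : ℝ in atTop, ‖t * Real.exp (-t ^ 2 / 2)‖ ≤ Real.exp (-t ^ 2 / 4) := by
      filter_upwards [eventually_ge_atTop (0:ℝ)] with t ht
      rw [Real.norm_eq_abs, abs_of_nonneg (by positivity)]
      have h1 : t ≤ Real.exp (t ^ 2 / 4) := by
        nlinarith [Real.add_one_le_exp (t ^ 2 / 4), sq_nonneg (t - 2)]
      calc t * Real.exp (-t ^ 2 / 2)
          ≤ Real.exp (t ^ 2 / 4) * Real.exp (-t ^ 2 / 2) :=
            mul_le_mul_of_nonneg_right h1 (Real.exp_pos _).le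
        _ = Real.exp (-t ^ 2 / 4) := by rw [← Real.exp_add]; congr 1; ring
    have h := squeeze_zero_norm' hb (aux_tendsto (by norm_num : (0:ℝ) < 4))
    simpa using h.neg
  have hint : IntegrableOn (fun t : ℝ => (t ^ 2 - 1) * Real.exp (-t ^ 2 / 2)) (Set.Ioi a) := by
    have : (fun t : ℝ => (t ^ 2 - 1) * Real.exp (-t ^ 2 / 2))
        = fun t : ℝ => t ^ 2 * Real.exp (-t ^ 2 / 2) - Real.exp (-t ^ 2 / 2) := by
      funext t; ring
    rw [this]
    exact (integrable_g2.sub integrable_g0).integrableOn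
  have h := integral_Ioi_of_hasDerivAt_of_tendsto' hderiv hint htend
  simpa using h

lemma sub_lemma (a : ℝ) (f : ℝ → ℝ) :
    ∫ x in Set.Ioi (0:ℝ), f (x + a) = ∫ t in Set.Ioi a, f t := by
  have h := (measurePreserving_add_right (volume : Measure ℝ) a).setIntegral_preimage_emb
    (measurableEmbedding_addRight a) f (Set.Ioi a)
  rwa [Set.preimage_add_const_Ioi, sub_self] at h

lemma Ioc_eq (a : ℝ) (ha : 0 ≤ a) :
    ∫ t in Set.Ioc (0:ℝ) a, Real.exp (-t ^ 2 / 2)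
      = (Real.sqrt 2) * ∫ t in Set.Ioc (0:ℝ) (a / Real.sqrt 2), Real.exp (-t ^ 2) := by
  have h2 : (0:ℝ) < Real.sqrt 2 := Real.sqrt_pos.mpr (by norm_num)
  rw [← intervalIntegral.integral_of_le ha,
    ← intervalIntegral.integral_of_le (by positivity : (0:ℝ) ≤ a / Real.sqrt 2)]
  have h := intervalIntegral.integral_comp_div (a := 0) (b := a) (c := Real.sqrt 2)
    (fun t => Real.exp (-t ^ 2)) h2.ne'
  have heq : ∀ x : ℝ, Real.exp (-(x / Real.sqrt 2) ^ 2) = Real.exp (-x ^ 2 / 2) := by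
    intro x
    congr 1
    rw [div_pow, Real.sq_sqrt (by norm_num : (0:ℝ) ≤ 2)]
    ring
  simp only [heq, zero_div] at h
  rw [h]
  simp [smul_eq_mul]

lemma J0 (a : ℝ) (ha : 0 < a) :
    ∫ t in Set.Ioi a, Real.exp (-t ^ 2 / 2)
      = (Real.sqrt Real.pi / Real.sqrt 2) * (1 - erf (a / Real.sqrt 2)) := by
  have hq : (0:ℝ) < Real.sqrt 2 := Real.sqrt_pos.mpr (by norm_num)
  have hp : (0:ℝ) < Real.sqrt Real.pi := Real.sqrt_pos.mpr Real.pi_pos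
  have hq2 : Real.sqrt 2 * Real.sqrt 2 = 2 := Real.mul_self_sqrt (by norm_num)
  have hsplit := setIntegral_union (f := fun t : ℝ => Real.exp (-t ^ 2 / 2))
      (μ := volume) (s := Set.Ioc 0 a) (t := Set.Ioi a) (Set.Ioc_disjoint_Ioi le_rfl) measurableSet_Ioi
      integrable_g0.integrableOn integrable_g0.integrableOn
  rw [Set.Ioc_union_Ioi_eq_Ioi ha.le] at hsplit
  have htot : ∫ x in Set.Ioi (0:ℝ), Real.exp (-x ^ 2 / 2)
      = Real.sqrt 2 * Real.sqrt Real.pi / 2 := by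
    have h : (fun x : ℝ => Real.exp (-x ^ 2 / 2))
        = fun x : ℝ => Real.exp (-(1/2:ℝ) * x ^ 2) := by funext x; ring_nf
    rw [h, integral_gaussian_Ioi]
    rw [show (Real.pi / (1/2) : ℝ) = 2 * Real.pi by ring,
      Real.sqrt_mul (by norm_num : (0:ℝ) ≤ 2)]
  rw [htot, Ioc_eq a ha.le] at hsplit
  have herf : erf (a / Real.sqrt 2)
      = (2 / Real.sqrt Real.pi) * ∫ t in Set.Ioc (0:ℝ) (a / Real.sqrt 2), Real.exp (-t ^ 2) := rfl
  rw [herf]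
  set I := ∫ t in Set.Ioc (0:ℝ) (a / Real.sqrt 2), Real.exp (-t ^ 2)
  have hIoi : ∫ t in Set.Ioi a, Real.exp (-t ^ 2 / 2)
      = Real.sqrt 2 * Real.sqrt Real.pi / 2 - Real.sqrt 2 * I := by linarith
  rw [hIoi]
  field_simp
  linear_combination (Real.sqrt Real.pi - 2 * I) * hq2

lemma main_eq (a : ℝ) (ha : 0 < a) :
    2 * ∫ x in Set.Ioi (0 : ℝ),
        x ^ 2 * (1 / Real.sqrt (2 * Real.pi)) * Real.exp (-(x + a) ^ 2 / 2)
      = (1 + a ^ 2) * (1 - erf (a / Real.sqrt 2)) -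
          a * Real.sqrt (2 / Real.pi) * Real.exp (-a ^ 2 / 2) := by
  have hq : (0:ℝ) < Real.sqrt 2 := Real.sqrt_pos.mpr (by norm_num)
  have hp : (0:ℝ) < Real.sqrt Real.pi := Real.sqrt_pos.mpr Real.pi_pos
  have hq2 : Real.sqrt 2 * Real.sqrt 2 = 2 := Real.mul_self_sqrt (by norm_num)
  have hc2 : Real.sqrt (2 * Real.pi) = Real.sqrt 2 * Real.sqrt Real.pi :=
    Real.sqrt_mul (by norm_num) _
  have hdv : Real.sqrt (2 / Real.pi) = Real.sqrt 2 / Real.sqrt Real.pi :=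
    Real.sqrt_div (by norm_num) _
  have h1 : (∫ x in Set.Ioi (0:ℝ),
        x ^ 2 * (1 / Real.sqrt (2 * Real.pi)) * Real.exp (-(x + a) ^ 2 / 2))
      = ∫ t in Set.Ioi a,
        (t - a) ^ 2 * (1 / Real.sqrt (2 * Real.pi)) * Real.exp (-t ^ 2 / 2) := by
    have h := sub_lemma a
      (fun t => (t - a) ^ 2 * (1 / Real.sqrt (2 * Real.pi)) * Real.exp (-t ^ 2 / 2))
    simp only [add_sub_cancel_right] at h
    exact h
  set c : ℝ := 1 / Real.sqrt (2 * Real.pi) with hcdef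
  have hiA : IntegrableOn (fun t : ℝ => (t ^ 2 - 1) * Real.exp (-t ^ 2 / 2)) (Set.Ioi a) := by
    have he : (fun t : ℝ => (t ^ 2 - 1) * Real.exp (-t ^ 2 / 2))
        = fun t : ℝ => t ^ 2 * Real.exp (-t ^ 2 / 2) - Real.exp (-t ^ 2 / 2) := by
      funext t; ring
    rw [he]; exact (integrable_g2.sub integrable_g0).integrableOn
  have h2 : ∫ t in Set.Ioi a, (t - a) ^ 2 * c * Real.exp (-t ^ 2 / 2)
      = ∫ t in Set.Ioi a,
          (c * ((t ^ 2 - 1) * Real.exp (-t ^ 2 / 2))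
            + (a ^ 2 * c + c) * Real.exp (-t ^ 2 / 2)
            - (2 * a * c) * (t * Real.exp (-t ^ 2 / 2))) :=
    integral_congr_ae (Filter.Eventually.of_forall fun t => by ring)
  have h3 : ∫ t in Set.Ioi a,
          (c * ((t ^ 2 - 1) * Real.exp (-t ^ 2 / 2))
            + (a ^ 2 * c + c) * Real.exp (-t ^ 2 / 2)
            - (2 * a * c) * (t * Real.exp (-t ^ 2 / 2)))
      = c * (∫ t in Set.Ioi a, (t ^ 2 - 1) * Real.exp (-t ^ 2 / 2))
        + (a ^ 2 * c + c) * (∫ t in Set.Ioi a, Real.exp (-t ^ 2 / 2))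
        - (2 * a * c) * (∫ t in Set.Ioi a, t * Real.exp (-t ^ 2 / 2)) := by
    rw [integral_sub, integral_add]
    · rw [integral_const_mul, integral_const_mul, integral_const_mul]
    · exact (hiA.const_mul c)
    · exact (integrable_g0.integrableOn.const_mul _)
    · exact ((hiA.const_mul c).add (integrable_g0.integrableOn.const_mul _))
    · exact (integrable_g1.integrableOn.const_mul _)
  rw [h1, h2, h3, J0 a ha, J1, J2]
  rw [hdv, hcdef, hc2]
  have k1 : (1 / (Real.sqrt 2 * Real.sqrt Real.pi)) * (Real.sqrt Real.pi / Real.sqrt 2)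
      = 1 / 2 := by
    rw [div_mul_div_comm, one_mul]
    rw [show Real.sqrt 2 * Real.sqrt Real.pi * Real.sqrt 2
        = Real.sqrt Real.pi * 2 by linear_combination Real.sqrt Real.pi * hq2]
    rw [div_eq_div_iff (by positivity) (by norm_num)]
    ring
  have k2 : Real.sqrt 2 / Real.sqrt Real.pi
      = 2 * (1 / (Real.sqrt 2 * Real.sqrt Real.pi)) := by
    rw [div_eq_iff hp.ne', mul_assoc, one_div, mul_comm (Real.sqrt 2) (Real.sqrt Real.pi),
      mul_inv, ← mul_assoc, ← mul_assoc]
    field_simp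
    linear_combination hq2
  linear_combination (2 * (1 + a ^ 2) * (1 - erf (a / Real.sqrt 2))) * k1
    + (a * Real.exp (-a ^ 2 / 2)) * k2

lemma integrableOn_aux (a : ℝ) (ha : 0 ≤ a) :
    IntegrableOn
      (fun x : ℝ => x ^ 2 * (1 / Real.sqrt (2 * Real.pi)) * Real.exp (-(x + a) ^ 2 / 2))
      (Set.Ioi 0) := by
  have hg : IntegrableOn
      (fun x : ℝ => (1 / Real.sqrt (2 * Real.pi)) * (x ^ 2 * Real.exp (-x ^ 2 / 2)))
      (Set.Ioi 0) := (integrable_g2.const_mul _).integrableOn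
  refine hg.mono' ?_ ?_
  · apply Continuous.aestronglyMeasurable
    continuity
  · filter_upwards [ae_restrict_mem measurableSet_Ioi] with x hx
    have hx0 : (0:ℝ) ≤ x := le_of_lt hx
    rw [Real.norm_eq_abs, abs_of_nonneg (by positivity)]
    have h1 : -(x + a) ^ 2 / 2 ≤ -x ^ 2 / 2 := by nlinarith
    calc x ^ 2 * (1 / Real.sqrt (2 * Real.pi)) * Real.exp (-(x + a) ^ 2 / 2)
        ≤ x ^ 2 * (1 / Real.sqrt (2 * Real.pi)) * Real.exp (-x ^ 2 / 2) :=
          mul_le_mul_of_nonneg_left (Real.exp_le_exp.mpr h1) (by positivity)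
      _ = (1 / Real.sqrt (2 * Real.pi)) * (x ^ 2 * Real.exp (-x ^ 2 / 2)) := by ring

lemma anti :
    StrictAntiOn (fun a : ℝ =>
        2 * ∫ x in Set.Ioi (0 : ℝ),
          x ^ 2 * (1 / Real.sqrt (2 * Real.pi)) * Real.exp (-(x + a) ^ 2 / 2))
      (Set.Ioi 0) := by
  intro a ha b hb hab
  simp only
  have ha0 : (0:ℝ) < a := ha
  have hb0 : (0:ℝ) < b := hb
  have hfa := integrableOn_aux a ha0.le
  have hfb := integrableOn_aux b hb0.le
  have hpos : 0 < ∫ x in Set.Ioi (0:ℝ),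
      (x ^ 2 * (1 / Real.sqrt (2 * Real.pi)) * Real.exp (-(x + a) ^ 2 / 2)
        - x ^ 2 * (1 / Real.sqrt (2 * Real.pi)) * Real.exp (-(x + b) ^ 2 / 2)) := by
    rw [setIntegral_pos_iff_support_of_nonneg_ae]
    · refine lt_of_lt_of_le (b := volume (Set.Ioi (0:ℝ))) ?_ (measure_mono ?_)
      · exact (by simp [Real.volume_Ioi] :
          (0:ENNReal) < volume (Set.Ioi (0:ℝ)))
      · intro x hx
        refine ⟨?_, hx⟩
        have hx0 : (0:ℝ) < x := hx
        have hlt : -(x + b) ^ 2 / 2 < -(x + a) ^ 2 / 2 := by nlinarith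
        have := Real.exp_lt_exp.mpr hlt
        simp only [Function.mem_support]
        have hc : (0:ℝ) < 1 / Real.sqrt (2 * Real.pi) := by positivity
        nlinarith [sq_nonneg x, mul_pos (mul_pos (pow_pos hx0 2) hc)
          (sub_pos.mpr this)]
    · filter_upwards [ae_restrict_mem measurableSet_Ioi] with x hx
      simp only [Pi.zero_apply]
      have hx0 : (0:ℝ) ≤ x := le_of_lt hx
      have hle : -(x + b) ^ 2 / 2 ≤ -(x + a) ^ 2 / 2 := by nlinarith
      have := Real.exp_le_exp.mpr hle
      have hc : (0:ℝ) ≤ 1 / Real.sqrt (2 * Real.pi) := by positivity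
      nlinarith [sq_nonneg x, mul_nonneg (mul_nonneg (sq_nonneg x) hc)
        (sub_nonneg.mpr this)]
    · exact hfa.sub hfb
  rw [integral_sub hfa hfb] at hpos
  linarith

lemma limit_zero :
    Tendsto (fun a : ℝ =>
        2 * ∫ x in Set.Ioi (0 : ℝ),
          x ^ 2 * (1 / Real.sqrt (2 * Real.pi)) * Real.exp (-(x + a) ^ 2 / 2))
      atTop (nhds 0) := by
  set K : ℝ := ∫ x in Set.Ioi (0:ℝ),
      x ^ 2 * (1 / Real.sqrt (2 * Real.pi)) * Real.exp (-x ^ 2 / 2) with hK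
  have hKint : IntegrableOn
      (fun x : ℝ => x ^ 2 * (1 / Real.sqrt (2 * Real.pi)) * Real.exp (-x ^ 2 / 2))
      (Set.Ioi 0) := by
    have h := (integrable_g2.const_mul (1 / Real.sqrt (2 * Real.pi))).integrableOn
      (s := Set.Ioi (0:ℝ))
    have he : (fun x : ℝ => (1 / Real.sqrt (2 * Real.pi)) * (x ^ 2 * Real.exp (-x ^ 2 / 2)))
        = fun x : ℝ => x ^ 2 * (1 / Real.sqrt (2 * Real.pi)) * Real.exp (-x ^ 2 / 2) := by
      funext x; ring
    rwa [he] at h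
  have hg : Tendsto (fun a : ℝ => (2 * K) * Real.exp (-a ^ 2 / 2)) atTop (nhds 0) := by
    have h1 : Tendsto (fun t : ℝ => t ^ 2) atTop atTop := tendsto_pow_atTop two_ne_zero
    have h2 : Tendsto (fun t : ℝ => t ^ 2 / 2) atTop atTop :=
      h1.atTop_div_const (by norm_num)
    have h3 : Tendsto (fun t : ℝ => -t ^ 2 / 2) atTop atBot := by
      simpa [Function.comp_def, neg_div] using tendsto_neg_atTop_atBot.comp h2
    have h4 : Tendsto (fun a : ℝ => Real.exp (-a ^ 2 / 2)) atTop (nhds 0) :=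
      Real.tendsto_exp_atBot.comp h3
    simpa using h4.const_mul (2 * K)
  apply squeeze_zero' ?_ ?_ hg
  · filter_upwards with a
    have : 0 ≤ ∫ x in Set.Ioi (0:ℝ),
        x ^ 2 * (1 / Real.sqrt (2 * Real.pi)) * Real.exp (-(x + a) ^ 2 / 2) := by
      apply setIntegral_nonneg measurableSet_Ioi
      intro x _
      positivity
    linarith
  · filter_upwards [eventually_ge_atTop (0:ℝ)] with a ha
    have hmono : (∫ x in Set.Ioi (0:ℝ),
          x ^ 2 * (1 / Real.sqrt (2 * Real.pi)) * Real.exp (-(x + a) ^ 2 / 2))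
        ≤ ∫ x in Set.Ioi (0:ℝ), Real.exp (-a ^ 2 / 2) *
            (x ^ 2 * (1 / Real.sqrt (2 * Real.pi)) * Real.exp (-x ^ 2 / 2)) := by
      refine setIntegral_mono_on (integrableOn_aux a ha) (hKint.const_mul _)
        measurableSet_Ioi ?_
      intro x hx
      have hx0 : (0:ℝ) ≤ x := le_of_lt hx
      have h1 : -(x + a) ^ 2 / 2 ≤ -a ^ 2 / 2 + -x ^ 2 / 2 := by nlinarith
      calc x ^ 2 * (1 / Real.sqrt (2 * Real.pi)) * Real.exp (-(x + a) ^ 2 / 2)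
          ≤ x ^ 2 * (1 / Real.sqrt (2 * Real.pi)) *
              (Real.exp (-a ^ 2 / 2) * Real.exp (-x ^ 2 / 2)) := by
            rw [← Real.exp_add]
            exact mul_le_mul_of_nonneg_left (Real.exp_le_exp.mpr h1) (by positivity)
        _ = Real.exp (-a ^ 2 / 2) *
              (x ^ 2 * (1 / Real.sqrt (2 * Real.pi)) * Real.exp (-x ^ 2 / 2)) := by ring
    rw [integral_const_mul, ← hK] at hmono
    nlinarith [hmono]

end Stmt15Aux

theorem stmt_15 :
    (∀ a : ℝ, 0 < a →
      2 * ∫ x in Set.Ioi (0 : ℝ),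
          x ^ 2 * (1 / Real.sqrt (2 * Real.pi)) * Real.exp (-(x + a) ^ 2 / 2) =
        (1 + a ^ 2) * (1 - erf (a / Real.sqrt 2)) -
          a * Real.sqrt (2 / Real.pi) * Real.exp (-a ^ 2 / 2)) ∧
    StrictAntiOn (fun a : ℝ =>
        2 * ∫ x in Set.Ioi (0 : ℝ),
          x ^ 2 * (1 / Real.sqrt (2 * Real.pi)) * Real.exp (-(x + a) ^ 2 / 2))
      (Set.Ioi 0) ∧
    Tendsto (fun a : ℝ =>
        2 * ∫ x in Set.Ioi (0 : ℝ),
          x ^ 2 * (1 / Real.sqrt (2 * Real.pi)) * Real.exp (-(x + a) ^ 2 / 2))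
      atTop (nhds 0) := by
  exact ⟨fun a ha => Stmt15Aux.main_eq a ha, Stmt15Aux.anti, Stmt15Aux.limit_zero⟩
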